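/- Let d ≤ k and let X ∈ ℝ^{d×k} have full rank d. Let X̃ ∈ ℝ^{d×k} be such that X X̃ᵀ is symmetric positive semidefinite, and set ΔX = X̃ − X. Then 0 ≤ ‖ΔX‖_F² − √2 · σ_d(X) · ‖ΔX‖_F + ‖X̃ᵀX̃ − XᵀX‖_F. -/
import Mathlib


open Matrix

/-- Euclidean norm of a vector. -/
noncomputable def euclNorm {n : ℕ} (v : Fin n → ℝ) : ℝ :=
  Real.sqrt (∑ i, (v i) ^ 2)

/-- Frobenius norm of a matrix. -/
noncomputable def frobNorm {m n : ℕ} (A : Matrix (Fin m) (Fin n) ℝ) : ℝ :=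
  Real.sqrt (∑ i, ∑ j, (A i j) ^ 2)

/-- The smallest (d-th) singular value of `X ∈ ℝ^{d×k}` (for `d ≤ k`),
characterized variationally as `min_{‖u‖=1} ‖Xᵀ u‖`. -/
noncomputable def sigmaMin {d k : ℕ} (X : Matrix (Fin d) (Fin k) ℝ) : ℝ :=
  sInf {r | ∃ u : Fin d → ℝ, euclNorm u = 1 ∧ r = euclNorm (Matrix.vecMul u X)}

/-- The Procrustes distance: `min` over orthogonal `Q` of `‖X − Q X̃‖_F`. -/
noncomputable def rho {d k : ℕ} (X Y : Matrix (Fin d) (Fin k) ℝ) : ℝ :=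
  sInf {r | ∃ Q : Matrix (Fin d) (Fin d) ℝ, Qᵀ * Q = 1 ∧ r = frobNorm (X - Q * Y)}

private lemma cs_sum {ι : Type*} [Fintype ι] (f g : ι → ℝ) :
    ∑ i, f i * g i ≤ Real.sqrt (∑ i, f i ^ 2) * Real.sqrt (∑ i, g i ^ 2) := by
  calc ∑ i, f i * g i ≤ |∑ i, f i * g i| := le_abs_self _
    _ = Real.sqrt ((∑ i, f i * g i) ^ 2) := (Real.sqrt_sq_eq_abs _).symm
    _ ≤ Real.sqrt ((∑ i, f i ^ 2) * (∑ i, g i ^ 2)) :=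
        Real.sqrt_le_sqrt (Finset.sum_mul_sq_le_sq_mul_sq _ f g)
    _ = _ := Real.sqrt_mul (by positivity) _

private lemma frobNorm_nonneg {m n : ℕ} (A : Matrix (Fin m) (Fin n) ℝ) : 0 ≤ frobNorm A :=
  Real.sqrt_nonneg _

private lemma frobNorm_sq {m n : ℕ} (A : Matrix (Fin m) (Fin n) ℝ) :
    frobNorm A ^ 2 = ∑ i, ∑ j, (A i j) ^ 2 := Real.sq_sqrt (by positivity)

private lemma frob_inner_le {m n : ℕ} (A B : Matrix (Fin m) (Fin n) ℝ) :
    ∑ i, ∑ j, A i j * B i j ≤ frobNorm A * frobNorm B := by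
  have h := cs_sum (fun p : Fin m × Fin n => A p.1 p.2) (fun p : Fin m × Fin n => B p.1 p.2)
  simpa [frobNorm, Fintype.sum_prod_type] using h

private lemma frob_triangle {m n : ℕ} (A B : Matrix (Fin m) (Fin n) ℝ) :
    frobNorm (A + B) ≤ frobNorm A + frobNorm B := by
  have key : frobNorm (A + B) ^ 2 ≤ (frobNorm A + frobNorm B) ^ 2 := by
    rw [frobNorm_sq]
    have e : ∀ i j, ((A + B) i j) ^ 2
        = (A i j) ^ 2 + 2 * (A i j * B i j) + (B i j) ^ 2 := by
      intro i j; simp [Matrix.add_apply]; ring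
    simp only [e, Finset.sum_add_distrib, ← Finset.mul_sum]
    nlinarith [frob_inner_le A B, frobNorm_sq A, frobNorm_sq B,
      frobNorm_nonneg A, frobNorm_nonneg B]
  calc frobNorm (A + B) = Real.sqrt (frobNorm (A + B) ^ 2) :=
        (Real.sqrt_sq (frobNorm_nonneg _)).symm
    _ ≤ Real.sqrt ((frobNorm A + frobNorm B) ^ 2) := Real.sqrt_le_sqrt key
    _ = frobNorm A + frobNorm B := Real.sqrt_sq (by have := frobNorm_nonneg A; have := frobNorm_nonneg B; linarith)

private lemma frobNorm_neg {m n : ℕ} (A : Matrix (Fin m) (Fin n) ℝ) :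
    frobNorm (-A) = frobNorm A := by
  simp [frobNorm, Matrix.neg_apply]

private lemma sigmaMin_nonneg {d k : ℕ} (X : Matrix (Fin d) (Fin k) ℝ) : 0 ≤ sigmaMin X := by
  apply Real.sInf_nonneg
  rintro r ⟨u, -, rfl⟩
  exact Real.sqrt_nonneg _

private lemma sigma_bound {d k : ℕ} (X : Matrix (Fin d) (Fin k) ℝ) (u : Fin d → ℝ) :
    sigmaMin X ^ 2 * (∑ l, u l ^ 2) ≤ ∑ i, (Matrix.vecMul u X i) ^ 2 := by
  rcases eq_or_ne (∑ l, u l ^ 2) 0 with h | h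
  · rw [h, mul_zero]; positivity
  · have hs : 0 < ∑ l, u l ^ 2 := lt_of_le_of_ne (by positivity) (Ne.symm h)
    set a := Real.sqrt (∑ l, u l ^ 2) with ha
    have ha0 : 0 < a := Real.sqrt_pos.2 hs
    have ha2 : a ^ 2 = ∑ l, u l ^ 2 := Real.sq_sqrt hs.le
    have hunit : euclNorm (a⁻¹ • u) = 1 := by
      have : ∑ l, ((a⁻¹ • u) l) ^ 2 = a⁻¹ ^ 2 * ∑ l, u l ^ 2 := by
        simp [Pi.smul_apply, mul_pow, Finset.mul_sum]
      rw [euclNorm, this, ← ha2]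
      rw [inv_pow]
      rw [inv_mul_cancel₀ (by positivity)]
      exact Real.sqrt_one
    have hmem : euclNorm (Matrix.vecMul (a⁻¹ • u) X)
        ∈ {r | ∃ v : Fin d → ℝ, euclNorm v = 1 ∧ r = euclNorm (Matrix.vecMul v X)} :=
      ⟨a⁻¹ • u, hunit, rfl⟩
    have hbdd : BddBelow {r | ∃ v : Fin d → ℝ, euclNorm v = 1 ∧ r = euclNorm (Matrix.vecMul v X)} :=
      ⟨0, by rintro r ⟨v, -, rfl⟩; exact Real.sqrt_nonneg _⟩
    have hle : sigmaMin X ≤ euclNorm (Matrix.vecMul (a⁻¹ • u) X) := csInf_le hbdd hmem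
    have hscale : euclNorm (Matrix.vecMul (a⁻¹ • u) X) = a⁻¹ * euclNorm (Matrix.vecMul u X) := by
      rw [Matrix.smul_vecMul]
      have : ∑ i, ((a⁻¹ • Matrix.vecMul u X) i) ^ 2
          = a⁻¹ ^ 2 * ∑ i, (Matrix.vecMul u X i) ^ 2 := by
        simp [Pi.smul_apply, mul_pow, Finset.mul_sum]
      rw [euclNorm, this, Real.sqrt_mul (by positivity), Real.sqrt_sq (by positivity)]
      rfl
    have h1 : sigmaMin X * a ≤ euclNorm (Matrix.vecMul u X) := by
      rw [hscale] at hle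
      calc sigmaMin X * a ≤ (a⁻¹ * euclNorm (Matrix.vecMul u X)) * a := by
            exact mul_le_mul_of_nonneg_right hle ha0.le
        _ = euclNorm (Matrix.vecMul u X) := by field_simp
    have hN2 : (euclNorm (Matrix.vecMul u X)) ^ 2 = ∑ i, (Matrix.vecMul u X i) ^ 2 :=
      Real.sq_sqrt (by positivity)
    nlinarith [sigmaMin_nonneg X, ha0.le, mul_nonneg (sigmaMin_nonneg X) ha0.le,
      Real.sqrt_nonneg (∑ i, (Matrix.vecMul u X i) ^ 2)]

theorem stmt9 {d k : ℕ} (hdk : d ≤ k)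
    (X : Matrix (Fin d) (Fin k) ℝ) (hX : X.rank = d)
    (Xt : Matrix (Fin d) (Fin k) ℝ)
    (hpsd : (X * Xtᵀ).PosSemidef) :
    0 ≤ frobNorm (Xt - X) ^ 2 - Real.sqrt 2 * sigmaMin X * frobNorm (Xt - X)
        + frobNorm (Xtᵀ * Xt - Xᵀ * X) := by
  set Δ : Matrix (Fin d) (Fin k) ℝ := Xt - X with hΔdef
  set A : Matrix (Fin k) (Fin k) ℝ := Xᵀ * Δ with hAdef
  set Sp : Matrix (Fin k) (Fin k) ℝ := Xᵀ * Δ + Δᵀ * X with hSpdef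
  set E : Matrix (Fin k) (Fin k) ℝ := Δᵀ * Δ with hEdef
  set S : Matrix (Fin d) (Fin d) ℝ := Δ * Xᵀ with hSdef
  have hε := frobNorm_nonneg Δ
  have hσ := sigmaMin_nonneg X
  -- decomposition
  have hdecomp : Xtᵀ * Xt - Xᵀ * X = Sp + E := by
    rw [hSpdef, hEdef, hΔdef]
    simp only [Matrix.transpose_sub, Matrix.sub_mul, Matrix.mul_sub]
    abel
  -- symmetry of S = Δ Xᵀ
  have hsym : ∀ l m, S l m = S m l := by
    intro l m
    have h1 : (X * Xtᵀ) m l = (X * Xtᵀ) l m := by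
      have := hpsd.1.apply l m
      simpa using this
    have e1 : S l m = (X * Xtᵀ) m l - (X * Xᵀ) l m := by
      simp only [hSdef, hΔdef, Matrix.sub_mul, Matrix.sub_apply, Matrix.mul_apply,
        Matrix.transpose_apply]
      rw [sub_left_inj]
      exact Finset.sum_congr rfl (fun i _ => mul_comm _ _)
    have e2 : S m l = (X * Xtᵀ) l m - (X * Xᵀ) m l := by
      simp only [hSdef, hΔdef, Matrix.sub_mul, Matrix.sub_apply, Matrix.mul_apply,
        Matrix.transpose_apply]
      rw [sub_left_inj]
      exact Finset.sum_congr rfl (fun i _ => mul_comm _ _)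
    have e3 : (X * Xᵀ) l m = (X * Xᵀ) m l := by
      simp only [Matrix.mul_apply, Matrix.transpose_apply]
      exact Finset.sum_congr rfl (fun i _ => mul_comm _ _)
    rw [e1, e2, h1, e3]
  -- T = ∑ᵢⱼ A i j * A j i is nonnegative
  have hT1 : ∑ i, ∑ j, A i j * A j i = Matrix.trace (A * A) := by
    simp [Matrix.trace, Matrix.diag, Matrix.mul_apply]
  have hT2 : Matrix.trace (A * A) = Matrix.trace (S * S) := by
    rw [hAdef, hSdef]
    calc Matrix.trace ((Xᵀ * Δ) * (Xᵀ * Δ)) = Matrix.trace (Xᵀ * (Δ * (Xᵀ * Δ))) := by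
          rw [Matrix.mul_assoc]
      _ = Matrix.trace ((Δ * (Xᵀ * Δ)) * Xᵀ) := Matrix.trace_mul_comm _ _
      _ = Matrix.trace ((Δ * Xᵀ) * (Δ * Xᵀ)) := by
          simp only [Matrix.mul_assoc]
  have hT3 : Matrix.trace (S * S) = ∑ l, ∑ m, (S l m) ^ 2 := by
    simp only [Matrix.trace, Matrix.diag, Matrix.mul_apply]
    exact Finset.sum_congr rfl fun l _ => Finset.sum_congr rfl fun m _ => by
      rw [← hsym l m]; ring
  have hT : 0 ≤ ∑ i, ∑ j, A i j * A j i := by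
    rw [hT1, hT2, hT3]; positivity
  -- ‖A‖² ≥ σ² ε²
  have hAσ : sigmaMin X ^ 2 * (frobNorm Δ ^ 2) ≤ ∑ i, ∑ j, (A i j) ^ 2 := by
    rw [frobNorm_sq]
    have step : ∀ j : Fin k, sigmaMin X ^ 2 * (∑ l, (Δ l j) ^ 2) ≤ ∑ i, (A i j) ^ 2 := by
      intro j
      have h := sigma_bound X (fun l => Δ l j)
      have he : ∀ i, A i j = Matrix.vecMul (fun l => Δ l j) X i := by
        intro i
        simp only [hAdef, Matrix.mul_apply, Matrix.transpose_apply, Matrix.vecMul, dotProduct]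
        exact Finset.sum_congr rfl (fun l _ => mul_comm _ _)
      calc sigmaMin X ^ 2 * (∑ l, (Δ l j) ^ 2) ≤ ∑ i, (Matrix.vecMul (fun l => Δ l j) X i) ^ 2 := h
        _ = ∑ i, (A i j) ^ 2 := by
            exact Finset.sum_congr rfl (fun i _ => by rw [he i])
    calc sigmaMin X ^ 2 * ∑ l, ∑ j, (Δ l j) ^ 2
        = ∑ j, sigmaMin X ^ 2 * (∑ l, (Δ l j) ^ 2) := by
          rw [← Finset.mul_sum, Finset.sum_comm]
      _ ≤ ∑ j, ∑ i, (A i j) ^ 2 := Finset.sum_le_sum (fun j _ => step j)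
      _ = ∑ i, ∑ j, (A i j) ^ 2 := Finset.sum_comm
  -- frobSq Sp = 2 frobSq A + 2 T
  have hSpsq : frobNorm Sp ^ 2
      = 2 * (∑ i, ∑ j, (A i j) ^ 2) + 2 * (∑ i, ∑ j, A i j * A j i) := by
    rw [frobNorm_sq]
    have e : ∀ i j, (Sp i j) ^ 2 = (A i j) ^ 2 + (A j i) ^ 2 + 2 * (A i j * A j i) := by
      intro i j
      have : Sp i j = A i j + A j i := by
        simp only [hSpdef, hAdef, Matrix.add_apply, Matrix.mul_apply, Matrix.transpose_apply]
        rw [add_right_inj]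
        exact Finset.sum_congr rfl (fun l _ => by ring)
      rw [this]; ring
    simp only [e, Finset.sum_add_distrib, ← Finset.mul_sum]
    have : ∑ i, ∑ j, (A j i) ^ 2 = ∑ i, ∑ j, (A i j) ^ 2 := Finset.sum_comm
    rw [this]; ring
  -- frobNorm Sp ≥ √2 σ ε
  have hSplb : Real.sqrt 2 * sigmaMin X * frobNorm Δ ≤ frobNorm Sp := by
    have h1 : 2 * (sigmaMin X * frobNorm Δ) ^ 2 ≤ frobNorm Sp ^ 2 := by
      rw [hSpsq]; nlinarith [hAσ, hT]
    calc Real.sqrt 2 * sigmaMin X * frobNorm Δ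
        = Real.sqrt 2 * Real.sqrt ((sigmaMin X * frobNorm Δ) ^ 2) := by
          rw [Real.sqrt_sq (by positivity)]; ring
      _ = Real.sqrt (2 * (sigmaMin X * frobNorm Δ) ^ 2) := (Real.sqrt_mul (by norm_num) _).symm
      _ ≤ Real.sqrt (frobNorm Sp ^ 2) := Real.sqrt_le_sqrt h1
      _ = frobNorm Sp := Real.sqrt_sq (frobNorm_nonneg _)
  -- frobNorm E ≤ ε²
  have hE : frobNorm E ≤ frobNorm Δ ^ 2 := by
    have h1 : ∑ i, ∑ j, (E i j) ^ 2 ≤ (∑ i, ∑ j, (Δ i j) ^ 2) ^ 2 := by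
      have step : ∀ i j : Fin k, (E i j) ^ 2 ≤ (∑ l, (Δ l i) ^ 2) * (∑ l, (Δ l j) ^ 2) := by
        intro i j
        have : E i j = ∑ l, Δ l i * Δ l j := by
          simp only [hEdef, Matrix.mul_apply, Matrix.transpose_apply]
        rw [this]
        exact Finset.sum_mul_sq_le_sq_mul_sq _ _ _
      calc ∑ i, ∑ j, (E i j) ^ 2
          ≤ ∑ i, ∑ j, (∑ l, (Δ l i) ^ 2) * (∑ l, (Δ l j) ^ 2) :=
            Finset.sum_le_sum fun i _ => Finset.sum_le_sum fun j _ => step i j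
        _ = (∑ i : Fin k, ∑ l, (Δ l i) ^ 2) * (∑ j : Fin k, ∑ l, (Δ l j) ^ 2) := by
            rw [Finset.sum_mul_sum]
        _ = (∑ i, ∑ j, (Δ i j) ^ 2) ^ 2 := by
            rw [Finset.sum_comm]; ring
    calc frobNorm E = Real.sqrt (∑ i, ∑ j, (E i j) ^ 2) := rfl
      _ ≤ Real.sqrt ((∑ i, ∑ j, (Δ i j) ^ 2) ^ 2) := Real.sqrt_le_sqrt h1
      _ = ∑ i, ∑ j, (Δ i j) ^ 2 := Real.sqrt_sq (by positivity)
      _ = frobNorm Δ ^ 2 := (frobNorm_sq Δ).symm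
  -- reverse triangle: frobNorm Sp ≤ frobNorm(Sp+E) + frobNorm E
  have htri : frobNorm Sp ≤ frobNorm (Xtᵀ * Xt - Xᵀ * X) + frobNorm E := by
    have : Sp = (Sp + E) + (-E) := by abel
    calc frobNorm Sp = frobNorm ((Sp + E) + (-E)) := by rw [← this]
      _ ≤ frobNorm (Sp + E) + frobNorm (-E) := frob_triangle _ _
      _ = frobNorm (Xtᵀ * Xt - Xᵀ * X) + frobNorm E := by rw [frobNorm_neg, hdecomp]
  linarith [hSplb, htri, hE, frobNorm_nonneg (Xtᵀ * Xt - Xᵀ * X)]
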